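/- arXiv:2507.18246 — 4 statements merged into one kernel-verified Lean document; each statement's English description precedes it below -/
import Mathlib

section
/- Every dependency relation D on Σ gives rise to a distribution of Σ by sending each action a to the set of non-trivial maximal cliques of the graph of D containing a; this assignment cliques : Dep_Σ → Dist_Σ is a Galois insertion: it is order-preserving, has an order-preserving right adjoint (sending a distribution dev to the dependency relation {(a,b) : dev(a) ∩ dev(b) ≠ ∅}), and the composite right-adjoint-after-cliques is the identity on Dep_Σ up to equivalence. -/
/-- A distribution of `σ`: a type of devices together with an assignment of a set of
devices to each action. -/
structure Distn (σ : Type) where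
  Dev : Type
  dev : σ → Set Dev

/-- The preorder on distributions: `d ≤ d'` iff overlaps of device sets in `d` are
overlaps in `d'` (this is the relation `d' ≥ d` of the paper). -/
def Distn.Le {σ : Type} (d d' : Distn σ) : Prop :=
  ∀ a b : σ, (d.dev a ∩ d.dev b).Nonempty → (d'.dev a ∩ d'.dev b).Nonempty

/-- A clique of the graph of `D`: a set whose elements are pairwise related by `D`. -/
def IsCliqueOf {σ : Type} (D : σ → σ → Prop) (S : Set σ) : Prop :=
  ∀ a ∈ S, ∀ b ∈ S, D a b

/-- A maximal clique: a clique such that any vertex related to every member belongs to it. -/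
def IsMaxCliqueOf {σ : Type} (D : σ → σ → Prop) (S : Set σ) : Prop :=
  IsCliqueOf D S ∧ ∀ x : σ, (∀ y ∈ S, D x y) → x ∈ S

/-- The distribution obtained from a dependency relation: devices are the non-trivial
(non-singleton) maximal cliques of the graph of `D`, and each action is sent to the set
of such cliques containing it. -/
def cliquesDist {σ : Type} (D : σ → σ → Prop) : Distn σ where
  Dev := Set σ
  dev a := {S : Set σ | IsMaxCliqueOf D S ∧ (¬ ∃ x : σ, S = {x}) ∧ a ∈ S}

/-- The dependency relation underlying a distribution: `(a,b) ∈ D` iff `a = b` or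
`dev(a) ∩ dev(b) ≠ ∅` (the reflexive closure guarantees a dependency relation). -/
def Distn.toDep {σ : Type} (d : Distn σ) : σ → σ → Prop :=
  fun a b => a = b ∨ (d.dev a ∩ d.dev b).Nonempty

section
variable {σ : Type} {D : σ → σ → Prop}

lemma exists_max_clique (hr : Reflexive D) (hs : Symmetric D) {S : Set σ}
    (hS : IsCliqueOf D S) : ∃ T, S ⊆ T ∧ IsMaxCliqueOf D T := by
  obtain ⟨T, hST, hT⟩ := zorn_subset_nonempty {U : Set σ | IsCliqueOf D U}
    (fun c hc hchain _ => ⟨⋃₀ c, fun a ha b hb => by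
      obtain ⟨U, hU, haU⟩ := ha
      obtain ⟨V, hV, hbV⟩ := hb
      rcases hchain.total hU hV with h | h
      · exact hc hV a (h haU) b hbV
      · exact hc hU a haU b (h hbV),
      fun s hs => Set.subset_sUnion_of_mem hs⟩) S hS
  refine ⟨T, hST, hT.prop, fun x hx => ?_⟩
  have : IsCliqueOf D (insert x T) := by
    intro a ha b hb
    rcases ha with rfl | ha <;> rcases hb with rfl | hb
    · exact hr _
    · exact hx b hb
    · exact hs (hx a ha)
    · exact hT.prop a ha b hb
  have := hT.2 this (Set.subset_insert x T)
  exact this (Set.mem_insert x T)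

lemma pair_clique (hr : Reflexive D) (hs : Symmetric D) {a b : σ} (h : D a b) :
    IsCliqueOf D ({a, b} : Set σ) := by
  intro x hx y hy
  rcases hx with rfl | rfl <;> rcases hy with rfl | rfl
  · exact hr _
  · exact h
  · exact hs h
  · exact hr _

lemma max_clique_nontrivial (hs : Symmetric D) {T : Set σ} (hT : IsMaxCliqueOf D T)
    {a c : σ} (ha : a ∈ T) (hc : D a c) (hne : c ≠ a) : ¬ ∃ x : σ, T = {x} := by
  rintro ⟨x, rfl⟩
  have hxa : a = x := ha
  subst hxa
  have : c ∈ ({a} : Set σ) := hT.2 c (fun y hy => by rw [Set.mem_singleton_iff] at hy; subst hy; exact hs hc)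
  exact hne this

/-- For `D a b` with `a ≠ c` witness existing, get nonempty intersection in `cliquesDist D`. -/
lemma cliques_overlap (hr : Reflexive D) (hs : Symmetric D) {a b : σ} (hab : D a b)
    (hne : b ≠ a) : ((cliquesDist D).dev a ∩ (cliquesDist D).dev b).Nonempty := by
  obtain ⟨T, hsub, hT⟩ := exists_max_clique hr hs (pair_clique hr hs hab)
  have haT : a ∈ T := hsub (Set.mem_insert a {b})
  have hbT : b ∈ T := hsub (by right; rfl)
  have hnt := max_clique_nontrivial hs hT haT hab hne
  exact ⟨T, ⟨hT, hnt, haT⟩, ⟨hT, hnt, hbT⟩⟩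
end
lemma nontrivial_witness {σ : Type} {S : Set σ} (hnt : ¬ ∃ x : σ, S = {x}) {a : σ}
    (ha : a ∈ S) : ∃ c ∈ S, c ≠ a := by
  by_contra h
  push_neg at h
  exact hnt ⟨a, Set.ext fun x => ⟨fun hx => h x hx, fun hx => by rw [Set.mem_singleton_iff] at hx; subst hx; exact ha⟩⟩

/-- `cliques : Dep_σ → Dist_σ` is order-preserving, has an order-preserving
right adjoint `Distn.toDep`, and the composite `toDep ∘ cliques` is the identity on
dependency relations (up to equivalence, here: pointwise iff). -/
theorem cliques_galois_insertion (σ : Type) :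
    (∀ D D' : σ → σ → Prop, Reflexive D → Symmetric D → Reflexive D' → Symmetric D' →
      (∀ a b : σ, D a b → D' a b) → Distn.Le (cliquesDist D) (cliquesDist D')) ∧
    (∀ d d' : Distn σ, Distn.Le d d' → ∀ a b : σ, d.toDep a b → d'.toDep a b) ∧
    (∀ D : σ → σ → Prop, Reflexive D → Symmetric D → ∀ e : Distn σ,
      (Distn.Le (cliquesDist D) e ↔ ∀ a b : σ, D a b → e.toDep a b)) ∧
    (∀ D : σ → σ → Prop, Reflexive D → Symmetric D →
      ∀ a b : σ, (cliquesDist D).toDep a b ↔ D a b) := by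
  refine ⟨?_, ?_, ?_, ?_⟩
  · intro D D' hr hs hr' hs' himp a b hab'
    obtain ⟨S, ⟨hSm, hSnt, haS⟩, -, -, hbS⟩ := hab'
    have hab : D a b := hSm.1 a haS b hbS
    by_cases h : b = a
    · rw [h]
      obtain ⟨c, hcS, hcne⟩ := nontrivial_witness hSnt haS
      have hac : D' a c := himp a c (hSm.1 a haS c hcS)
      obtain ⟨z, hz, -⟩ := cliques_overlap hr' hs' hac hcne
      exact ⟨z, hz, hz⟩
    · exact cliques_overlap hr' hs' (himp a b hab) h
  · rintro d d' hle a b (rfl | hne)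
    · exact Or.inl rfl
    · exact Or.inr (hle a b hne)
  · intro D hr hs e
    constructor
    · intro hle a b hab
      by_cases h : a = b
      · exact Or.inl h
      · exact Or.inr (hle a b (cliques_overlap hr hs hab fun x => h x.symm))
    · rintro H a b ⟨S, ⟨hSm, hSnt, haS⟩, _, _, hbS⟩
      by_cases hab : b = a
      · rw [hab]
        obtain ⟨c, hcS, hcne⟩ := nontrivial_witness hSnt haS
        rcases H a c (hSm.1 a haS c hcS) with h | ⟨z, hz, -⟩
        · exact absurd h.symm hcne
        · exact ⟨z, hz, hz⟩
      · rcases H a b (hSm.1 a haS b hbS) with h | h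
        · exact absurd h.symm hab
        · exact h
  · intro D hr hs a b
    constructor
    · rintro (rfl | ⟨S, ⟨hSm, -, haS⟩, -, -, hbS⟩)
      · exact hr a
      · exact hSm.1 a haS b hbS
    · intro h
      by_cases e : a = b
      · exact Or.inl e
      · exact Or.inr (cliques_overlap hr hs h fun x => e x.symm)
end

section
/- In the free premonoidal category FG over a device graph G, with devices of morphisms defined inductively (identities have no devices, whiskered generators have their generating devices, composites have the union), any two morphisms f, g with disjoint device sets interchange: f ∥ g and g ∥ f. -/
/-- A device graph over a set of objects `V`: arrows with source/target lists of
objects, a set of devices, and a device assignment. -/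
structure DevGraph (V : Type) where
  E : Type
  src : E → List V
  tgt : E → List V
  Dev : Type
  dev : E → Set Dev

/-- Formal morphisms of the free premonoidal category over a device graph: identities,
whiskered generators `X ▷ e ◁ Y`, and composites.  (The source/target of a whiskered
generator is recorded via explicit equality proofs.) -/
inductive Expr {V : Type} (G : DevGraph V) : List V → List V → Type
  | id (X : List V) : Expr G X X
  | gen (X Y : List V) (e : G.E) {S T : List V}
      (hS : S = X ++ G.src e ++ Y) (hT : T = X ++ G.tgt e ++ Y) : Expr G S T
  | comp {X Y Z : List V} : Expr G X Y → Expr G Y Z → Expr G X Z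

/-- The inductive extension of the device assignment to formal morphisms. -/
def Expr.devOf {V : Type} {G : DevGraph V} : ∀ {X Y : List V}, Expr G X Y → Set G.Dev
  | _, _, .id _ => ∅
  | _, _, .gen _ _ e _ _ => G.dev e
  | _, _, .comp f g => f.devOf ∪ g.devOf

/-- Left whiskering of formal morphisms. -/
def Expr.lw {V : Type} {G : DevGraph V} (A : List V) :
    ∀ {X Y : List V}, Expr G X Y → Expr G (A ++ X) (A ++ Y)
  | _, _, .id X => .id (A ++ X)
  | _, _, .gen X Y e hS hT =>
      .gen (A ++ X) Y e (by subst hS; simp [List.append_assoc])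
        (by subst hT; simp [List.append_assoc])
  | _, _, .comp f g => .comp (f.lw A) (g.lw A)

/-- Right whiskering of formal morphisms. -/
def Expr.rw {V : Type} {G : DevGraph V} (A : List V) :
    ∀ {X Y : List V}, Expr G X Y → Expr G (X ++ A) (Y ++ A)
  | _, _, .id X => .id (X ++ A)
  | _, _, .gen X Y e hS hT =>
      .gen X (Y ++ A) e (by subst hS; simp [List.append_assoc])
        (by subst hT; simp [List.append_assoc])
  | _, _, .comp f g => .comp (f.rw A) (g.rw A)

/-- The congruence on formal morphisms: the least congruence for composition containing
the category laws and interchange of (whiskerings of) orthogonal generators. -/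
inductive ERel {V : Type} (G : DevGraph V) : ∀ {X Y : List V}, Expr G X Y → Expr G X Y → Prop
  | refl {X Y : List V} (f : Expr G X Y) : ERel G f f
  | symm {X Y : List V} {f g : Expr G X Y} : ERel G f g → ERel G g f
  | trans {X Y : List V} {f g h : Expr G X Y} : ERel G f g → ERel G g h → ERel G f h
  | compCongr {X Y Z : List V} {f f' : Expr G X Y} {g g' : Expr G Y Z} :
      ERel G f f' → ERel G g g' → ERel G (f.comp g) (f'.comp g')
  | assoc {W X Y Z : List V} (f : Expr G W X) (g : Expr G X Y) (h : Expr G Y Z) :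
      ERel G ((f.comp g).comp h) (f.comp (g.comp h))
  | idLeft {X Y : List V} (f : Expr G X Y) : ERel G ((Expr.id X).comp f) f
  | idRight {X Y : List V} (f : Expr G X Y) : ERel G (f.comp (Expr.id Y)) f
  | interchange (e e' : G.E) (horth : G.dev e ∩ G.dev e' = ∅)
      (X Y Z : List V) {S M M' T : List V}
      (h1 : S = X ++ G.src e ++ (Y ++ G.src e' ++ Z))
      (h2 : M = X ++ G.tgt e ++ (Y ++ G.src e' ++ Z))
      (h3 : M = (X ++ G.tgt e ++ Y) ++ G.src e' ++ Z)
      (h4 : T = (X ++ G.tgt e ++ Y) ++ G.tgt e' ++ Z)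
      (h5 : S = (X ++ G.src e ++ Y) ++ G.src e' ++ Z)
      (h6 : M' = (X ++ G.src e ++ Y) ++ G.tgt e' ++ Z)
      (h7 : M' = X ++ G.src e ++ (Y ++ G.tgt e' ++ Z))
      (h8 : T = X ++ G.tgt e ++ (Y ++ G.tgt e' ++ Z)) :
      ERel G ((Expr.gen X (Y ++ G.src e' ++ Z) e h1 h2).comp
               (Expr.gen (X ++ G.tgt e ++ Y) Z e' h3 h4))
            ((Expr.gen (X ++ G.src e ++ Y) Z e' h5 h6).comp
               (Expr.gen X (Y ++ G.tgt e' ++ Z) e h7 h8))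

/-- Interchange (one direction) of formal morphisms in the free premonoidal category:
the two whiskered composites are related by the congruence. -/
def parE {V : Type} {G : DevGraph V} {X Y X' Y' : List V}
    (f : Expr G X Y) (g : Expr G X' Y') : Prop :=
  ERel G ((f.rw X').comp (g.lw Y)) ((g.lw X).comp (f.rw Y'))

instance exprSetoid {V : Type} (G : DevGraph V) (X Y : List V) : Setoid (Expr G X Y) :=
  ⟨ERel G, ⟨ERel.refl, ERel.symm, ERel.trans⟩⟩

/-- Hom-sets of the free premonoidal category: formal morphisms modulo the congruence. -/
def HomQ {V : Type} (G : DevGraph V) (X Y : List V) : Type :=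
  Quotient (exprSetoid G X Y)

/-- Two whiskered generators with the same generator and (propositionally) equal
whiskering contexts are equal. -/
theorem Expr.gen_eq {V : Type} {G : DevGraph V} {X X' Y Y' : List V} (e : G.E)
    {S T : List V} (hS : S = X ++ G.src e ++ Y) (hT : T = X ++ G.tgt e ++ Y)
    (hS' : S = X' ++ G.src e ++ Y') (hT' : T = X' ++ G.tgt e ++ Y')
    (hX : X = X') (hY : Y = Y') :
    (Expr.gen X Y e hS hT : Expr G S T) = Expr.gen X' Y' e hS' hT' := by
  subst hX; subst hY; rfl

theorem parE_of_disjoint {V : Type} {G : DevGraph V}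
    {X Y X' Y' : List V} (f : Expr G X Y) (g : Expr G X' Y')
    (h : f.devOf ∩ g.devOf = ∅) : parE f g := by
  induction f with
  | id Z =>
    exact (ERel.idLeft _).trans (ERel.symm (ERel.idRight _))
  | comp f1 f2 ih1 ih2 =>
    simp only [Expr.devOf, Set.union_inter_distrib_right, Set.union_empty_iff] at h
    obtain ⟨hd1, hd2⟩ := h
    refine ERel.trans (ERel.assoc _ _ _) ?_
    refine ERel.trans (ERel.compCongr (ERel.refl _) (ih2 hd2)) ?_
    refine ERel.trans (ERel.symm (ERel.assoc _ _ _)) ?_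
    refine ERel.trans (ERel.compCongr (ih1 hd1) (ERel.refl _)) ?_
    exact ERel.assoc _ _ _
  | @gen A B e S T hS hT =>
    induction g with
    | id Z =>
      exact (ERel.idRight _).trans (ERel.symm (ERel.idLeft _))
    | comp g1 g2 ih1 ih2 =>
      simp only [Expr.devOf, Set.inter_union_distrib_left, Set.union_empty_iff] at h
      obtain ⟨hd1, hd2⟩ := h
      refine ERel.trans (ERel.symm (ERel.assoc _ _ _)) ?_
      refine ERel.trans (ERel.compCongr (ih1 hd1) (ERel.refl _)) ?_
      refine ERel.trans (ERel.assoc _ _ _) ?_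
      refine ERel.trans (ERel.compCongr (ERel.refl _) (ih2 hd2)) ?_
      exact ERel.symm (ERel.assoc _ _ _)
    | @gen A' B' e' S' T' hS' hT' =>
      have horth : G.dev e ∩ G.dev e' = ∅ := h
      have h1 : S ++ S' = A ++ G.src e ++ ((B ++ A') ++ G.src e' ++ B') := by
        simp [hS, hS', List.append_assoc]
      have h2 : T ++ S' = A ++ G.tgt e ++ ((B ++ A') ++ G.src e' ++ B') := by
        simp [hT, hS', List.append_assoc]
      have h3 : T ++ S' = (A ++ G.tgt e ++ (B ++ A')) ++ G.src e' ++ B' := by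
        simp [hT, hS', List.append_assoc]
      have h4 : T ++ T' = (A ++ G.tgt e ++ (B ++ A')) ++ G.tgt e' ++ B' := by
        simp [hT, hT', List.append_assoc]
      have h5 : S ++ S' = (A ++ G.src e ++ (B ++ A')) ++ G.src e' ++ B' := by
        simp [hS, hS', List.append_assoc]
      have h6 : S ++ T' = (A ++ G.src e ++ (B ++ A')) ++ G.tgt e' ++ B' := by
        simp [hS, hT', List.append_assoc]
      have h7 : S ++ T' = A ++ G.src e ++ ((B ++ A') ++ G.tgt e' ++ B') := by
        simp [hS, hT', List.append_assoc]
      have h8 : T ++ T' = A ++ G.tgt e ++ ((B ++ A') ++ G.tgt e' ++ B') := by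
        simp [hT, hT', List.append_assoc]
      have key := ERel.interchange (G := G) e e' horth A (B ++ A') B'
        h1 h2 h3 h4 h5 h6 h7 h8
      have e1 : ((Expr.gen A B e hS hT).rw S').comp ((Expr.gen A' B' e' hS' hT').lw T)
          = (Expr.gen A ((B ++ A') ++ G.src e' ++ B') e h1 h2).comp
            (Expr.gen (A ++ G.tgt e ++ (B ++ A')) B' e' h3 h4) := by
        simp only [Expr.rw, Expr.lw]
        congr 1 <;> apply Expr.gen_eq <;> simp [hS', hT, List.append_assoc]
      have e2 : ((Expr.gen A' B' e' hS' hT').lw S).comp ((Expr.gen A B e hS hT).rw T')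
          = (Expr.gen (A ++ G.src e ++ (B ++ A')) B' e' h5 h6).comp
            (Expr.gen A ((B ++ A') ++ G.tgt e' ++ B') e h7 h8) := by
        simp only [Expr.rw, Expr.lw]
        congr 1 <;> apply Expr.gen_eq <;> simp [hS, hT', List.append_assoc]
      rw [parE, e1, e2]
      exact key

/-- in the free premonoidal category over a device graph `G`, any two
morphisms with disjoint device sets interchange. -/
theorem orthogonal_morphisms_interchange {V : Type} (G : DevGraph V)
    {X Y X' Y' : List V} (f : Expr G X Y) (g : Expr G X' Y')
    (h : f.devOf ∩ g.devOf = ∅) : parE f g ∧ parE g f := by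
  exact ⟨parE_of_disjoint f g h,
    parE_of_disjoint g f (by rw [Set.inter_comm]; exact h)⟩
end

section
/- Every morphism of device graphs α : G → H induces a strict premonoidal functor F(α) : FG → FH acting as α_V* on objects (lists) and defined on morphisms by structural recursion (identities to identities, whiskered generators to whiskered images of generators, composites to composites); this assignment is well-defined on equivalence classes, preserves whiskerings, and is functorial: F(id) = id and F(β ∘ α) = F(β) ∘ F(α). -/
/-- A morphism of device graphs: maps on objects, arrows, commuting with sources and
targets, and preserving orthogonality (disjointness of device sets). -/
structure DevHom {V W : Type} (G : DevGraph V) (H : DevGraph W) where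
  onV : V → W
  onE : G.E → H.E
  src_comm : ∀ e : G.E, H.src (onE e) = (G.src e).map onV
  tgt_comm : ∀ e : G.E, H.tgt (onE e) = (G.tgt e).map onV
  orth : ∀ f g : G.E, G.dev f ∩ G.dev g = ∅ → H.dev (onE f) ∩ H.dev (onE g) = ∅

/-- The action of a morphism of device graphs on formal morphisms of the free
premonoidal categories, defined by structural recursion. -/
def mapExpr {V W : Type} {G : DevGraph V} {H : DevGraph W} (α : DevHom G H) :
    ∀ {X Y : List V}, Expr G X Y → Expr H (X.map α.onV) (Y.map α.onV)
  | _, _, .id X => .id (X.map α.onV)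
  | _, _, .gen X Y e hS hT =>
      .gen (X.map α.onV) (Y.map α.onV) (α.onE e)
        (by subst hS; simp [α.src_comm]) (by subst hT; simp [α.tgt_comm])
  | _, _, .comp f g => .comp (mapExpr α f) (mapExpr α g)

/-- The identity morphism of device graphs. -/
def DevHom.idH {V : Type} (G : DevGraph V) : DevHom G G where
  onV := id
  onE := id
  src_comm := by intro e; simp
  tgt_comm := by intro e; simp
  orth := fun _ _ h => h

/-- Composition of morphisms of device graphs. -/
def DevHom.compH {V W U : Type} {G : DevGraph V} {H : DevGraph W} {K : DevGraph U}
    (α : DevHom G H) (β : DevHom H K) : DevHom G K where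
  onV := β.onV ∘ α.onV
  onE := β.onE ∘ α.onE
  src_comm := by intro e; simp [β.src_comm, α.src_comm, List.map_map]
  tgt_comm := by intro e; simp [β.tgt_comm, α.tgt_comm, List.map_map]
  orth := fun f g h => β.orth _ _ (α.orth _ _ h)

section Helpers

variable {V : Type} {G : DevGraph V}

theorem id_heq {X X' : List V} (h : X = X') :
    HEq (Expr.id (G := G) X) (Expr.id (G := G) X') := by subst h; rfl

theorem gen_heq {X Y X' Y' S T S' T' : List V} (e : G.E)
    (hS : S = X ++ G.src e ++ Y) (hT : T = X ++ G.tgt e ++ Y)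
    (hS' : S' = X' ++ G.src e ++ Y') (hT' : T' = X' ++ G.tgt e ++ Y')
    (hX : X = X') (hY : Y = Y') :
    HEq (Expr.gen (G := G) X Y e hS hT) (Expr.gen X' Y' e hS' hT') := by
  subst hX; subst hY; subst hS; subst hS'; subst hT; subst hT'
  rfl

theorem comp_heq {X Y Z X' Y' Z' : List V} (hX : X = X') (hY : Y = Y') (hZ : Z = Z')
    {f : Expr G X Y} {f' : Expr G X' Y'} {g : Expr G Y Z} {g' : Expr G Y' Z'}
    (h1 : HEq f f') (h2 : HEq g g') : HEq (f.comp g) (f'.comp g') := by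
  subst hX; subst hY; subst hZ; cases h1; cases h2; rfl

theorem mapExpr_erel {W : Type} {H : DevGraph W} (α : DevHom G H) {X Y : List V}
    {f g : Expr G X Y} (h : ERel G f g) : ERel H (mapExpr α f) (mapExpr α g) := by
  induction h with
  | refl f => exact .refl _
  | symm _ ih => exact .symm ih
  | trans _ _ ih1 ih2 => exact .trans ih1 ih2
  | compCongr _ _ ih1 ih2 => exact .compCongr ih1 ih2
  | assoc f g h => exact .assoc _ _ _
  | idLeft f => exact .idLeft _
  | idRight f => exact .idRight _
  | interchange e e' horth X Y Z h1 h2 h3 h4 h5 h6 h7 h8 =>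
    subst h1; subst h2; subst h4; subst h6
    simp only [mapExpr]
    have key := ERel.interchange (G := H) (α.onE e) (α.onE e') (α.orth _ _ horth)
      (X.map α.onV) (Y.map α.onV) (Z.map α.onV)
      (S := (X ++ G.src e ++ (Y ++ G.src e' ++ Z)).map α.onV)
      (M := (X ++ G.tgt e ++ (Y ++ G.src e' ++ Z)).map α.onV)
      (M' := ((X ++ G.src e ++ Y) ++ G.tgt e' ++ Z).map α.onV)
      (T := ((X ++ G.tgt e ++ Y) ++ G.tgt e' ++ Z).map α.onV)
      (by simp [α.src_comm]) (by simp [α.src_comm, α.tgt_comm])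
      (by simp [α.src_comm, α.tgt_comm]) (by simp [α.tgt_comm])
      (by simp [α.src_comm]) (by simp [α.src_comm, α.tgt_comm])
      (by simp [α.src_comm, α.tgt_comm]) (by simp [α.tgt_comm])
    convert key using 3 <;> simp [α.src_comm, α.tgt_comm]

theorem mapExpr_lw {W : Type} {H : DevGraph W} (α : DevHom G H) (A : List V)
    {X Y : List V} (f : Expr G X Y) :
    HEq (mapExpr α (f.lw A)) ((mapExpr α f).lw (A.map α.onV)) := by
  induction f with
  | id X => simp only [Expr.lw, mapExpr]; exact id_heq (by simp)
  | gen X Y e hS hT => simp only [Expr.lw, mapExpr]; exact gen_heq _ _ _ _ _ (by simp) rfl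
  | comp f g ihf ihg =>
    simp only [Expr.lw, mapExpr]
    exact comp_heq (by simp) (by simp) (by simp) ihf ihg

theorem mapExpr_rw {W : Type} {H : DevGraph W} (α : DevHom G H) (A : List V)
    {X Y : List V} (f : Expr G X Y) :
    HEq (mapExpr α (f.rw A)) ((mapExpr α f).rw (A.map α.onV)) := by
  induction f with
  | id X => simp only [Expr.rw, mapExpr]; exact id_heq (by simp)
  | gen X Y e hS hT => simp only [Expr.rw, mapExpr]; exact gen_heq _ _ _ _ _ rfl (by simp)
  | comp f g ihf ihg =>
    simp only [Expr.rw, mapExpr]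
    exact comp_heq (by simp) (by simp) (by simp) ihf ihg

theorem mapExpr_id {X Y : List V} (f : Expr G X Y) :
    HEq (mapExpr (DevHom.idH G) f) f := by
  induction f with
  | id X => simp only [mapExpr]; exact id_heq (by simp [DevHom.idH])
  | gen X Y e hS hT =>
    simp only [mapExpr]
    exact gen_heq _ _ _ _ _ (by simp [DevHom.idH]) (by simp [DevHom.idH])
  | comp f g ihf ihg =>
    simp only [mapExpr]
    exact comp_heq (by simp [DevHom.idH]) (by simp [DevHom.idH]) (by simp [DevHom.idH]) ihf ihg

theorem mapExpr_comp {W U : Type} {H : DevGraph W} {K : DevGraph U}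
    (α : DevHom G H) (β : DevHom H K) {X Y : List V} (f : Expr G X Y) :
    HEq (mapExpr (α.compH β) f) (mapExpr β (mapExpr α f)) := by
  induction f with
  | id X => simp only [mapExpr]; exact id_heq (by simp [DevHom.compH])
  | gen X Y e hS hT =>
    simp only [mapExpr]
    exact gen_heq _ _ _ _ _ (by simp [DevHom.compH]) (by simp [DevHom.compH])
  | comp f g ihf ihg =>
    simp only [mapExpr]
    exact comp_heq (by simp [DevHom.compH]) (by simp [DevHom.compH]) (by simp [DevHom.compH]) ihf ihg

end Helpers

/-- every morphism of device graphs `α : G → H` induces a strict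
premonoidal functor `F(α) : FG → FH`: its action on morphisms is well defined on
equivalence classes, preserves whiskerings, and the assignment is functorial
(preserving identities and composition).  Equations between morphisms whose types
agree only propositionally are stated with `HEq`. -/
theorem free_premonoidal_functorial {V W U : Type}
    (G : DevGraph V) (H : DevGraph W) (K : DevGraph U) :
    (∀ (α : DevHom G H) {X Y : List V} (f g : Expr G X Y),
      ERel G f g → ERel H (mapExpr α f) (mapExpr α g)) ∧
    (∀ (α : DevHom G H) (A : List V) {X Y : List V} (f : Expr G X Y),
      HEq (mapExpr α (f.lw A)) ((mapExpr α f).lw (A.map α.onV))) ∧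
    (∀ (α : DevHom G H) (A : List V) {X Y : List V} (f : Expr G X Y),
      HEq (mapExpr α (f.rw A)) ((mapExpr α f).rw (A.map α.onV))) ∧
    (∀ {X Y : List V} (f : Expr G X Y), HEq (mapExpr (DevHom.idH G) f) f) ∧
    (∀ (α : DevHom G H) (β : DevHom H K) {X Y : List V} (f : Expr G X Y),
      HEq (mapExpr (α.compH β) f) (mapExpr β (mapExpr α f))) := by
  exact ⟨fun α _ _ f g h => mapExpr_erel α h,
    fun α A _ _ f => mapExpr_lw α A f,
    fun α A _ _ f => mapExpr_rw α A f,
    fun {_ _} f => mapExpr_id f,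
    fun α β _ _ f => mapExpr_comp α β f⟩
end

section
/- If a device graph G has an empty set of objects, then the free premonoidal category FG has a single object (the empty list), and its endomorphism monoid is isomorphic (as a monoid) to the trace monoid over the dependency relation induced by the distribution: (a,b) ∈ D iff dev(a) ∩ dev(b) ≠ ∅. -/
/-- The endomorphism monoid of the (unique) object of `FG` when `G` has no objects. -/
instance endMonoid {V : Type} (G : DevGraph V) : Monoid (HomQ G [] []) where
  one := ⟦Expr.id []⟧
  mul := Quotient.map₂ Expr.comp (fun _ _ h _ _ h' => ERel.compCongr h h')
  mul_assoc a b c := by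
    induction a using Quotient.inductionOn
    induction b using Quotient.inductionOn
    induction c using Quotient.inductionOn
    exact Quotient.sound (ERel.assoc _ _ _)
  one_mul a := by
    induction a using Quotient.inductionOn
    exact Quotient.sound (ERel.idLeft _)
  mul_one a := by
    induction a using Quotient.inductionOn
    exact Quotient.sound (ERel.idRight _)

/-- The generating relation for the trace congruence: `ab ~ ba` for independent `a,b`. -/
def traceRel (σ : Type) (D : σ → σ → Prop) : FreeMonoid σ → FreeMonoid σ → Prop :=
  fun x y => ∃ a b : σ, ¬ D a b ∧ x = FreeMonoid.of a * FreeMonoid.of b ∧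
    y = FreeMonoid.of b * FreeMonoid.of a

/-- The trace congruence `≡_D`. -/
def traceCon (σ : Type) (D : σ → σ → Prop) : Con (FreeMonoid σ) :=
  conGen (traceRel σ D)

section Aux

variable {V : Type} {G : DevGraph V}

lemma nil_eq (hV : IsEmpty V) (l : List V) : l = [] := by
  cases l with
  | nil => rfl
  | cons a _ => exact (hV.false a).elim

/-- The generator `e` as an endomorphism of `[]`. -/
def genE (hV : IsEmpty V) (e : G.E) : Expr G [] [] :=
  .gen [] [] e (by simp [nil_eq hV (G.src e)]) (by simp [nil_eq hV (G.tgt e)])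

lemma gen_eq (hV : IsEmpty V) (X Y : List V) (e : G.E) (hS : ([] : List V) = X ++ G.src e ++ Y)
    (hT : ([] : List V) = X ++ G.tgt e ++ Y) :
    Expr.gen X Y e hS hT = genE hV e := by
  obtain rfl : X = [] := nil_eq hV X
  obtain rfl : Y = [] := nil_eq hV Y
  rfl

/-- Casting an arbitrary morphism to an endomorphism of `[]`. -/
def conv (hV : IsEmpty V) {X Y : List V} (f : Expr G X Y) : Expr G [] [] :=
  cast (by rw [nil_eq hV X, nil_eq hV Y]) f

lemma conv_eq (hV : IsEmpty V) (f : Expr G [] []) : conv hV f = f :=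
  eq_of_heq (cast_heq _ f)

/-- The word of generators occurring in a formal morphism. -/
def toWord : ∀ {X Y : List V}, Expr G X Y → FreeMonoid G.E
  | _, _, .id _ => 1
  | _, _, .gen _ _ e _ _ => FreeMonoid.of e
  | _, _, .comp f g => toWord f * toWord g

/-- The dependency relation induced by the distribution. -/
abbrev Dep (G : DevGraph V) : G.E → G.E → Prop :=
  fun a b => (G.dev a ∩ G.dev b).Nonempty

lemma mulQ (x y : Expr G [] []) :
    (show HomQ G [] [] from ⟦x⟧) * (show HomQ G [] [] from ⟦y⟧) = ⟦x.comp y⟧ := rfl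

lemma oneQ : ((1 : HomQ G [] [])) = ⟦Expr.id []⟧ := rfl

/-- The monoid homomorphism from the free monoid on the alphabet to the
endomorphism monoid of `[]`. -/
def phi (hV : IsEmpty V) : FreeMonoid G.E →* HomQ G [] [] :=
  FreeMonoid.lift (fun e => (⟦genE hV e⟧ : HomQ G [] []))

lemma phi_interchange (hV : IsEmpty V) (a b : G.E) (h : ¬ Dep G a b) :
    phi hV (FreeMonoid.of a * FreeMonoid.of b) =
      phi hV (FreeMonoid.of b * FreeMonoid.of a) := by
  have horth : G.dev a ∩ G.dev b = ∅ := Set.not_nonempty_iff_eq_empty.mp h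
  have key := ERel.interchange (G := G) a b horth [] [] []
    (S := []) (M := []) (M' := []) (T := [])
    (by simp [nil_eq hV (G.src a), nil_eq hV (G.src b)])
    (by simp [nil_eq hV (G.tgt a), nil_eq hV (G.src b)])
    (by simp [nil_eq hV (G.tgt a), nil_eq hV (G.src b)])
    (by simp [nil_eq hV (G.tgt a), nil_eq hV (G.tgt b)])
    (by simp [nil_eq hV (G.src a), nil_eq hV (G.src b)])
    (by simp [nil_eq hV (G.src a), nil_eq hV (G.tgt b)])
    (by simp [nil_eq hV (G.src a), nil_eq hV (G.tgt b)])
    (by simp [nil_eq hV (G.tgt a), nil_eq hV (G.tgt b)])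
  rw [gen_eq hV, gen_eq hV, gen_eq hV, gen_eq hV] at key
  simp only [map_mul, phi, FreeMonoid.lift_eval_of, mulQ]
  exact Quotient.sound key

lemma phi_le (hV : IsEmpty V) : traceCon G.E (Dep G) ≤ Con.ker (phi hV) := by
  apply Con.conGen_le.mpr
  rintro x y ⟨a, b, hab, rfl, rfl⟩
  exact (Con.ker_rel _).mpr (phi_interchange hV a b hab)

lemma toWord_sound : ∀ {X Y : List V} {f g : Expr G X Y}, ERel G f g →
    traceCon G.E (Dep G) (toWord f) (toWord g) := by
  intro X Y f g h
  induction h with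
  | refl f => exact (traceCon G.E (Dep G)).refl _
  | symm _ ih => exact (traceCon G.E (Dep G)).symm ih
  | trans _ _ ih₁ ih₂ => exact (traceCon G.E (Dep G)).trans ih₁ ih₂
  | compCongr _ _ ih₁ ih₂ => exact (traceCon G.E (Dep G)).mul ih₁ ih₂
  | assoc f g h =>
      show traceCon G.E (Dep G) ((toWord f * toWord g) * toWord h)
        (toWord f * (toWord g * toWord h))
      rw [mul_assoc]
      exact (traceCon G.E (Dep G)).refl _
  | idLeft f =>
      show traceCon G.E (Dep G) (1 * toWord f) (toWord f)
      rw [one_mul]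
      exact (traceCon G.E (Dep G)).refl _
  | idRight f =>
      show traceCon G.E (Dep G) (toWord f * 1) (toWord f)
      rw [mul_one]
      exact (traceCon G.E (Dep G)).refl _
  | interchange e e' horth X Y Z h1 h2 h3 h4 h5 h6 h7 h8 =>
      exact ConGen.Rel.of _ _ ⟨e, e', by simp [Dep, horth], rfl, rfl⟩

/-- The map from the endomorphism monoid to the trace monoid. -/
def toWordQ : HomQ G [] [] → (traceCon G.E (Dep G)).Quotient :=
  Quotient.lift (fun f => ((toWord f : FreeMonoid G.E) : (traceCon G.E (Dep G)).Quotient))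
    (fun _ _ h => Con.eq _ |>.mpr (toWord_sound h))

lemma toWordQ_mul (p q : HomQ G [] []) :
    toWordQ (p * q) = toWordQ p * toWordQ q := by
  induction p using Quotient.inductionOn
  induction q using Quotient.inductionOn
  rfl

lemma phi_toWord (hV : IsEmpty V) : ∀ {X Y : List V} (f : Expr G X Y),
    phi hV (toWord f) = ⟦conv hV f⟧ := by
  intro X Y f
  induction f with
  | id X =>
      obtain rfl : X = [] := nil_eq hV X
      show (1 : HomQ G [] []) = _
      rw [oneQ, conv_eq]
  | gen X Y e hS hT =>
      rename_i S T
      obtain rfl : S = [] := nil_eq hV S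
      obtain rfl : T = [] := nil_eq hV T
      show phi hV (FreeMonoid.of e) = _
      rw [gen_eq hV X Y e hS hT, conv_eq]
      exact FreeMonoid.lift_eval_of _ e
  | comp f g ihf ihg =>
      rename_i X Y Z
      obtain rfl : X = [] := nil_eq hV X
      obtain rfl : Y = [] := nil_eq hV Y
      obtain rfl : Z = [] := nil_eq hV Z
      show phi hV (toWord f * toWord g) = _
      rw [map_mul, ihf, ihg, conv_eq, conv_eq, conv_eq, mulQ]

/-- The induced homomorphism from the trace monoid. -/
def psi (hV : IsEmpty V) : (traceCon G.E (Dep G)).Quotient →* HomQ G [] [] :=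
  Con.lift _ (phi hV) (phi_le hV)

lemma toWordQ_phi (hV : IsEmpty V) (w : FreeMonoid G.E) :
    toWordQ (phi hV w) = (w : (traceCon G.E (Dep G)).Quotient) := by
  induction w using FreeMonoid.inductionOn with
  | one => rfl
  | of a => rfl
  | mul x y ihx ihy => rw [map_mul, toWordQ_mul, ihx, ihy, ← Con.coe_mul]

end Aux

/-- if a device graph `G` has an empty set of objects (i.e. it is a
distribution of the alphabet `E_G`), then the free premonoidal category `FG` has a
single object (the empty list), and its endomorphism monoid is isomorphic, as a monoid,
to the trace monoid over the dependency relation `(a,b) ∈ D ↔ dev(a) ∩ dev(b) ≠ ∅`. -/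
theorem free_premonoidal_on_distribution_is_trace_monoid {V : Type}
    (G : DevGraph V) (hV : IsEmpty V) :
    Subsingleton (List V) ∧
    Nonempty ((traceCon G.E (fun a b => (G.dev a ∩ G.dev b).Nonempty)).Quotient
      ≃* HomQ G [] []) := by
  refine ⟨⟨fun a b => (nil_eq hV a).trans (nil_eq hV b).symm⟩, ⟨⟨⟨psi hV, toWordQ, ?_, ?_⟩,
    (psi hV).map_mul⟩⟩⟩
  · intro x
    induction x using Con.induction_on with
    | H w => exact toWordQ_phi hV w
  · intro q
    induction q using Quotient.inductionOn with
    | h f =>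
        show psi hV ((toWord f : FreeMonoid G.E) : (traceCon G.E (Dep G)).Quotient) = ⟦f⟧
        rw [psi, Con.lift_coe, phi_toWord, conv_eq]
end
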